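/- Fix λ > 0 and nonnegative constants u = Σ_{j≠j*} d_j and v = Σ_{j≠j*} d_j² with v > 0. Define for x > λ the function f(x) = (λux − λ(v + λu))/((x−λ)² + v). Then f attains its maximum on (λ, ∞) at x* = (uλ + v + √(u²v + v²))/u (when u > 0), and the maximum value equals (λ/2)(√(u²/v + 1) − 1). -/

import Mathlib

/-- The function `f(x) = (λux − λ(v + λu))/((x−λ)² + v)` attains its maximum on
`(λ, ∞)` at `x* = (uλ + v + √(u²v + v²))/u`, and the maximum value equals
`(λ/2)(√(u²/v + 1) − 1)`. -/
theorem orth_lasso_deviation_max (lam u v : ℝ) (hlam : 0 < lam)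
    (hu : 0 < u) (hv : 0 < v)
    (f : ℝ → ℝ)
    (hf : ∀ x, f x = (lam * u * x - lam * (v + lam * u)) / ((x - lam) ^ 2 + v))
    (xstar : ℝ)
    (hx : xstar = (u * lam + v + Real.sqrt (u ^ 2 * v + v ^ 2)) / u) :
    xstar ∈ Set.Ioi lam ∧ IsMaxOn f (Set.Ioi lam) xstar ∧
      f xstar = (lam / 2) * (Real.sqrt (u ^ 2 / v + 1) - 1) := by
  have hu' : u ≠ 0 := hu.ne'
  have hv' : v ≠ 0 := hv.ne'
  set s : ℝ := Real.sqrt (u ^ 2 * v + v ^ 2) with hsdef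
  have hsq : s ^ 2 = u ^ 2 * v + v ^ 2 := Real.sq_sqrt (by positivity)
  have hspos : 0 < s := Real.sqrt_pos.mpr (by positivity)
  have hvs : v < s := by nlinarith [mul_pos (mul_pos hu hu) hv]
  have hxt : xstar = lam + (v + s) / u := by rw [hx]; field_simp; ring
  have hxgt : lam < xstar := by
    rw [hxt]; have : 0 < (v + s) / u := by positivity
    linarith
  have hden : ∀ x : ℝ, (0:ℝ) < (x - lam) ^ 2 + v := fun x => by positivity
  have key : ∀ x : ℝ,
      (lam * (s - v) * ((x - lam) ^ 2 + v) - (lam * u * x - lam * (v + lam * u)) * (2 * v)) * u ^ 2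
        = lam * (s - v) * (u * (x - lam) - (v + s)) ^ 2 := by
    intro x
    linear_combination (lam * (2 * u * (x - lam) - (s + v))) * hsq
  have h0 : u * (xstar - lam) - (v + s) = 0 := by rw [hxt]; field_simp; ring
  have hval : f xstar = lam * (s - v) / (2 * v) := by
    rw [hf, div_eq_div_iff (hden _).ne' (by positivity : (2*v:ℝ) ≠ 0)]
    have hk : (lam * (s - v) * ((xstar - lam) ^ 2 + v) - (lam * u * xstar - lam * (v + lam * u)) * (2 * v)) * u ^ 2 = 0 := by
      rw [key xstar, h0]; ring
    have hu2 : (u:ℝ) ^ 2 ≠ 0 := pow_ne_zero _ hu'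
    rcases mul_eq_zero.mp hk with h | h
    · linarith
    · exact absurd h hu2
  refine ⟨hxgt, ?_, ?_⟩
  · intro x hxm
    simp only [Set.mem_Ioi] at hxm
    simp only [Set.mem_setOf_eq]
    rw [hf x, hval, div_le_div_iff₀ (hden x) (by positivity : (0:ℝ) < 2 * v)]
    have hk := key x
    have hnn : 0 ≤ lam * (s - v) * (u * (x - lam) - (v + s)) ^ 2 :=
      mul_nonneg (mul_nonneg hlam.le (by linarith)) (sq_nonneg _)
    nlinarith [hk, hnn, mul_pos hu hu]
  · rw [hval]
    have hsv : Real.sqrt (u ^ 2 / v + 1) = s / v := by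
      rw [show u ^ 2 / v + 1 = (s / v) ^ 2 by field_simp; linear_combination (-1) * hsq]
      exact Real.sqrt_sq (by positivity)
    rw [hsv]
    field_simp
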